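/- Let x_1,...,x_n and x'_1,...,x'_n be two independent i.i.д. samples uniform on {0,1}² with targets f*(s,t) = c₁s + c₂t, let ξ_{st} and ξ'_{st} be the respective counts of outcome (s,t), and let A be the event that ξ_{s0}+ξ_{s1} ≥ 1 and ξ'_{0t}+ξ'_{1t} ≥ 1 for all s,t ∈ {0,1}. Define h¹ from the first sample as h¹(s,t) = c₁s + c₂ξ_{s1}/(ξ_{s0}+ξ_{s1}) and h² from the second sample as the least-squares stump on the second feature fit to residuals f* - h¹ evaluated on the second sample. Then E[h¹(s,t) + h²(s,t) | A] = c₁ s + c₂ t exactly, for all (s,t) ∈ {0,1}². -/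

import Mathlib

/-- Number of samples equal to `(s, t)` among `ω : Fin n → Bool × Bool`. -/
def cnt {n : ℕ} (ω : Fin n → Bool × Bool) (s t : Bool) : ℕ :=
  (Finset.univ.filter (fun k => ω k = (s, t))).card

/-- Real value of a binary feature. -/
def bval (b : Bool) : ℝ := if b then 1 else 0

/-- The target `f*(s,t) = c₁ s + c₂ t`. -/
def fstar (c₁ c₂ : ℝ) (x : Bool × Bool) : ℝ := c₁ * bval x.1 + c₂ * bval x.2

/-- The first stump, built from the first sample `ω`. -/
noncomputable def h1 {n : ℕ} (c₁ c₂ : ℝ) (ω : Fin n → Bool × Bool) (x : Bool × Bool) : ℝ :=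
  c₁ * bval x.1 +
    c₂ * ((cnt ω x.1 true : ℝ) / ((cnt ω x.1 false : ℝ) + (cnt ω x.1 true : ℝ)))

/-- The second stump: least-squares stump on the second feature fit to the residuals
`f*(x'_k) - h¹(x'_k)` evaluated on the second (independent) sample `ω'`. -/
noncomputable def h2 {n : ℕ} (c₁ c₂ : ℝ) (ω ω' : Fin n → Bool × Bool) (t : Bool) : ℝ :=
  (∑ k : Fin n, if (ω' k).2 = t then fstar c₁ c₂ (ω' k) - h1 c₁ c₂ ω (ω' k) else 0) /
    ((cnt ω' false t : ℝ) + (cnt ω' true t : ℝ))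

/-- The event `A`: both leaves of `h¹` are nonempty in the first sample and both
leaves of `h²` are nonempty in the second sample. -/
def eventA {n : ℕ} (p : (Fin n → Bool × Bool) × (Fin n → Bool × Bool)) : Prop :=
  (∀ s : Bool, 1 ≤ cnt p.1 s false + cnt p.1 s true) ∧
    (∀ t : Bool, 1 ≤ cnt p.2 false t + cnt p.2 true t)

instance {n : ℕ} (p : (Fin n → Bool × Bool) × (Fin n → Bool × Bool)) :
    Decidable (eventA p) := by
  unfold eventA; infer_instance

/-! ### Auxiliary definitions for the proof -/

/-- The leaf ratio of the first stump. -/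
noncomputable def myR {n : ℕ} (ω : Fin n → Bool × Bool) (s : Bool) : ℝ :=
  (cnt ω s true : ℝ) / ((cnt ω s false : ℝ) + (cnt ω s true : ℝ))

def evA1 {n : ℕ} (ω : Fin n → Bool × Bool) : Prop :=
  ∀ s : Bool, 1 ≤ cnt ω s false + cnt ω s true

def evA2 {n : ℕ} (ω : Fin n → Bool × Bool) : Prop :=
  ∀ t : Bool, 1 ≤ cnt ω false t + cnt ω true t

instance {n : ℕ} (ω : Fin n → Bool × Bool) : Decidable (evA1 ω) := by
  unfold evA1; infer_instance

instance {n : ℕ} (ω : Fin n → Bool × Bool) : Decidable (evA2 ω) := by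
  unfold evA2; infer_instance

lemma filter_eventA (n : ℕ) :
    (Finset.univ.filter (fun p : (Fin n → Bool × Bool) × (Fin n → Bool × Bool) => eventA p))
      = (Finset.univ.filter (fun ω : Fin n → Bool × Bool => evA1 ω)) ×ˢ
        (Finset.univ.filter (fun ω : Fin n → Bool × Bool => evA2 ω)) := by
  ext p
  simp [eventA, evA1, evA2, Finset.mem_product]

/-- Flip the first coordinate of every sample point. -/
def flipA {n : ℕ} (ω : Fin n → Bool × Bool) : Fin n → Bool × Bool :=
  fun k => (!(ω k).1, (ω k).2)

lemma cnt_flipA {n : ℕ} (ω : Fin n → Bool × Bool) (s t : Bool) :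
    cnt (flipA ω) s t = cnt ω (!s) t := by
  unfold cnt flipA
  congr 1
  ext k
  simp only [Finset.mem_filter, Finset.mem_univ, true_and, Prod.ext_iff]
  cases h : (ω k).1 <;> cases s <;> simp [h]

lemma myR_flipA {n : ℕ} (ω : Fin n → Bool × Bool) (s : Bool) :
    myR (flipA ω) s = myR ω (!s) := by
  unfold myR; rw [cnt_flipA, cnt_flipA]

lemma flipA_flipA {n : ℕ} (ω : Fin n → Bool × Bool) : flipA (flipA ω) = ω := by
  funext k; simp [flipA]

lemma evA1_flipA {n : ℕ} (ω : Fin n → Bool × Bool) (h : evA1 ω) : evA1 (flipA ω) := by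
  intro s; rw [cnt_flipA, cnt_flipA]; exact h (!s)

/-- The flip involution on samples, as an equivalence. -/
def flipAEquiv (n : ℕ) : (Fin n → Bool × Bool) ≃ (Fin n → Bool × Bool) where
  toFun := flipA
  invFun := flipA
  left_inv := flipA_flipA
  right_inv := flipA_flipA

lemma sum_myR_eq (n : ℕ) (s : Bool) :
    ∑ ω ∈ Finset.univ.filter (fun ω : Fin n → Bool × Bool => evA1 ω), myR ω s
      = ∑ ω ∈ Finset.univ.filter (fun ω : Fin n → Bool × Bool => evA1 ω), myR ω false := by
  cases s
  · rfl
  · refine Finset.sum_equiv (flipAEquiv n) ?_ ?_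
    · intro ω
      simp only [Finset.mem_filter, Finset.mem_univ, true_and, flipAEquiv, Equiv.coe_fn_mk]
      constructor
      · exact evA1_flipA ω
      · intro h
        have := evA1_flipA _ h
        rwa [flipA_flipA] at this
    · intro ω _
      show myR ω true = myR (flipA ω) false
      rw [myR_flipA]
      rfl

lemma residual_eq {n : ℕ} (c₁ c₂ : ℝ) (ω : Fin n → Bool × Bool) (x : Bool × Bool) :
    fstar c₁ c₂ x - h1 c₁ c₂ ω x = c₂ * bval x.2 - c₂ * myR ω x.1 := by
  unfold fstar h1 myR; ring

lemma sum_ite_cnt {n : ℕ} (ω : Fin n → Bool × Bool) (s t : Bool) (v : ℝ) :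
    (∑ k : Fin n, if ω k = (s, t) then v else 0) = (cnt ω s t : ℝ) * v := by
  rw [← Finset.sum_filter, Finset.sum_const, cnt, nsmul_eq_mul]

lemma h2_eq {n : ℕ} (c₁ c₂ : ℝ) (ω ω' : Fin n → Bool × Bool) (t : Bool)
    (h : 1 ≤ cnt ω' false t + cnt ω' true t) :
    h2 c₁ c₂ ω ω' t = c₂ * bval t -
      ((cnt ω' false t : ℝ) * (c₂ * myR ω false) + (cnt ω' true t : ℝ) * (c₂ * myR ω true)) /
        ((cnt ω' false t : ℝ) + (cnt ω' true t : ℝ)) := by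
  have hD : ((cnt ω' false t : ℝ) + (cnt ω' true t : ℝ)) ≠ 0 := by
    have : (1 : ℝ) ≤ ((cnt ω' false t + cnt ω' true t : ℕ) : ℝ) := by exact_mod_cast h
    push_cast at this; linarith
  have hnum : (∑ k : Fin n, if (ω' k).2 = t then fstar c₁ c₂ (ω' k) - h1 c₁ c₂ ω (ω' k) else 0)
      = (cnt ω' false t : ℝ) * (c₂ * bval t - c₂ * myR ω false)
        + (cnt ω' true t : ℝ) * (c₂ * bval t - c₂ * myR ω true) := by
    rw [← sum_ite_cnt ω' false t (c₂ * bval t - c₂ * myR ω false),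
        ← sum_ite_cnt ω' true t (c₂ * bval t - c₂ * myR ω true),
        ← Finset.sum_add_distrib]
    apply Finset.sum_congr rfl
    intro k _
    rw [residual_eq]
    rcases hk : ω' k with ⟨a, b⟩
    cases a <;> cases b <;> cases t <;> simp [bval]
  unfold h2
  rw [hnum]
  field_simp
  ring

lemma innerSumA (n : ℕ) (c₁ c₂ : ℝ) (s t : Bool) (ω' : Fin n → Bool × Bool) (h : evA2 ω') :
    ∑ ω ∈ Finset.univ.filter (fun ω : Fin n → Bool × Bool => evA1 ω),
        (h1 c₁ c₂ ω (s, t) + h2 c₁ c₂ ω ω' t)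
      = ((Finset.univ.filter (fun ω : Fin n → Bool × Bool => evA1 ω)).card : ℝ)
          * (c₁ * bval s + c₂ * bval t) := by
  classical
  set F := Finset.univ.filter (fun ω : Fin n → Bool × Bool => evA1 ω) with hF
  set D : ℝ := (cnt ω' false t : ℝ) + (cnt ω' true t : ℝ) with hDdef
  have hD : D ≠ 0 := by
    have : (1 : ℝ) ≤ ((cnt ω' false t + cnt ω' true t : ℕ) : ℝ) := by exact_mod_cast h t
    push_cast at this; rw [hDdef]; linarith
  set w₀ : ℝ := (cnt ω' false t : ℝ) / D with hw₀
  set w₁ : ℝ := (cnt ω' true t : ℝ) / D with hw₁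
  set S : ℝ := ∑ ω ∈ F, myR ω false with hS
  have step : ∀ ω ∈ F, h1 c₁ c₂ ω (s, t) + h2 c₁ c₂ ω ω' t
      = (c₁ * bval s + c₂ * bval t) + c₂ * myR ω s
        - w₀ * (c₂ * myR ω false) - w₁ * (c₂ * myR ω true) := by
    intro ω _
    rw [h2_eq c₁ c₂ ω ω' t (h t)]
    show c₁ * bval s + c₂ * myR ω s + _ = _
    rw [hw₀, hw₁, hDdef]
    ring
  rw [Finset.sum_congr rfl step]
  have e0 : ∑ ω ∈ F, c₂ * myR ω s = c₂ * S := by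
    rw [← Finset.mul_sum, hS, hF, sum_myR_eq]
  have e1 : ∑ ω ∈ F, w₀ * (c₂ * myR ω false) = w₀ * (c₂ * S) := by
    rw [← Finset.mul_sum, ← Finset.mul_sum]
  have e2 : ∑ ω ∈ F, w₁ * (c₂ * myR ω true) = w₁ * (c₂ * S) := by
    rw [← Finset.mul_sum, ← Finset.mul_sum, hS, hF, sum_myR_eq]
  rw [Finset.sum_sub_distrib, Finset.sum_sub_distrib, Finset.sum_add_distrib,
      Finset.sum_const, nsmul_eq_mul, e0, e1, e2]
  have hw : w₀ + w₁ = 1 := by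
    rw [hw₀, hw₁, ← add_div, hDdef, div_self hD]
  linear_combination (-(c₂ * S)) * hw

lemma F1_nonempty (n : ℕ) (hn : 2 ≤ n) :
    (Finset.univ.filter (fun ω : Fin n → Bool × Bool => evA1 ω)).Nonempty := by
  refine ⟨fun k => ((decide (k.val = 0) : Bool), false), ?_⟩
  simp only [Finset.mem_filter, Finset.mem_univ, true_and]
  intro s
  have : 1 ≤ cnt (fun k : Fin n => ((decide (k.val = 0) : Bool), false)) s false := by
    rw [cnt]
    apply Finset.card_pos.mpr
    cases s
    · exact ⟨⟨1, by omega⟩, by simp⟩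
    · exact ⟨⟨0, by omega⟩, by simp⟩
  omega

lemma F2_nonempty (n : ℕ) (hn : 2 ≤ n) :
    (Finset.univ.filter (fun ω : Fin n → Bool × Bool => evA2 ω)).Nonempty := by
  refine ⟨fun k => (false, (decide (k.val = 0) : Bool)), ?_⟩
  simp only [Finset.mem_filter, Finset.mem_univ, true_and]
  intro t
  have : 1 ≤ cnt (fun k : Fin n => ((false : Bool), (decide (k.val = 0) : Bool))) false t := by
    rw [cnt]
    apply Finset.card_pos.mpr
    cases t
    · exact ⟨⟨1, by omega⟩, by simp⟩
    · exact ⟨⟨0, by omega⟩, by simp⟩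
  omega

/-- Theorem 1, part 1: with two independent samples, the two-step boosted model is
conditionally unbiased: `E[h¹(s,t) + h²(s,t) | A] = c₁ s + c₂ t` exactly. -/
theorem unbiased_independent_datasets (n : ℕ) (hn : 2 ≤ n) (c₁ c₂ : ℝ) (s t : Bool) :
    (∑ p ∈ Finset.univ.filter
        (fun p : (Fin n → Bool × Bool) × (Fin n → Bool × Bool) => eventA p),
        (h1 c₁ c₂ p.1 (s, t) + h2 c₁ c₂ p.1 p.2 t)) /
      ((Finset.univ.filter
        (fun p : (Fin n → Bool × Bool) × (Fin n → Bool × Bool) => eventA p)).card : ℝ)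
      = c₁ * bval s + c₂ * bval t := by
  classical
  rw [filter_eventA]
  rw [Finset.sum_product_right]
  have hsum : ∀ ω' ∈ Finset.univ.filter (fun ω : Fin n → Bool × Bool => evA2 ω),
      (∑ ω ∈ Finset.univ.filter (fun ω : Fin n → Bool × Bool => evA1 ω),
        (h1 c₁ c₂ ω (s, t) + h2 c₁ c₂ ω ω' t))
      = ((Finset.univ.filter (fun ω : Fin n → Bool × Bool => evA1 ω)).card : ℝ)
          * (c₁ * bval s + c₂ * bval t) := by
    intro ω' hω'
    have h2' : evA2 ω' := (Finset.mem_filter.mp hω').2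
    exact innerSumA n c₁ c₂ s t ω' h2'
  rw [Finset.sum_congr rfl hsum, Finset.sum_const, nsmul_eq_mul, Finset.card_product]
  have hc1 : ((Finset.univ.filter (fun ω : Fin n → Bool × Bool => evA1 ω)).card : ℝ) ≠ 0 :=
    Nat.cast_ne_zero.mpr (Finset.card_pos.mpr (F1_nonempty n hn)).ne'
  have hc2 : ((Finset.univ.filter (fun ω : Fin n → Bool × Bool => evA2 ω)).card : ℝ) ≠ 0 :=
    Nat.cast_ne_zero.mpr (Finset.card_pos.mpr (F2_nonempty n hn)).ne'
  push_cast
  rw [div_eq_iff (mul_ne_zero hc1 hc2)]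
  ring
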